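/- The transformation r1 of the quantum Garnier system G(1,1,1,1,1) is a quantum canonical transformation: suppose x1 is a unit of R, and define q1 = x1^{-1}, p1 = −x1^2y1 − x1x2y2 − α1·x1, q2 = x2x1^{-1}, p2 = x1y2. Then (q1, p1, q2, p2) again satisfy the canonical commutation relations: [q1,p1] = [q2,p2] = h and [q1,q2] = [p1,p2] = [q1,p2] = [q2,p1] = 0. -/
import Mathlib


/-- The transformation r1 of the quantum Garnier system G(1,1,1,1,1) is a quantum
canonical transformation. -/
theorem quantum_garnier_G11111_r1_canonical
    {R : Type*} [Ring R]
    (h α1 : R)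
    (hh : ∀ r : R, h * r = r * h)
    (hA1 : ∀ r : R, α1 * r = r * α1)
    (x1 y1 x2 y2 : R)
    (hx1y1 : x1 * y1 - y1 * x1 = h)
    (hx2y2 : x2 * y2 - y2 * x2 = h)
    (hx1x2 : x1 * x2 - x2 * x1 = 0)
    (hy1y2 : y1 * y2 - y2 * y1 = 0)
    (hx1y2 : x1 * y2 - y2 * x1 = 0)
    (hx2y1 : x2 * y1 - y1 * x2 = 0)
    (x1i : R) (hx1il : x1i * x1 = 1) (hx1ir : x1 * x1i = 1)
    (q1 p1 q2 p2 : R)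
    (hq1 : q1 = x1i)
    (hp1 : p1 = -(x1^2 * y1) - x1 * x2 * y2 - α1 * x1)
    (hq2 : q2 = x2 * x1i)
    (hp2 : p2 = x1 * y2) :
    q1 * p1 - p1 * q1 = h ∧ q2 * p2 - p2 * q2 = h ∧
    q1 * q2 - q2 * q1 = 0 ∧ p1 * p2 - p2 * p1 = 0 ∧
    q1 * p2 - p2 * q1 = 0 ∧ q2 * p1 - p1 * q2 = 0 := by
  rw [hq1, hp1, hq2, hp2]
  -- two-atom swap lemmas
  have e_y1x1 : y1 * x1 = x1 * y1 - h := by rw [← hx1y1]; noncomm_ring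
  have e_y2x2 : y2 * x2 = x2 * y2 - h := by rw [← hx2y2]; noncomm_ring
  have e_x2x1 : x2 * x1 = x1 * x2 := (sub_eq_zero.mp hx1x2).symm
  have e_y2y1 : y2 * y1 = y1 * y2 := (sub_eq_zero.mp hy1y2).symm
  have e_y2x1 : y2 * x1 = x1 * y2 := (sub_eq_zero.mp hx1y2).symm
  have e_x2y1 : x2 * y1 = y1 * x2 := sub_eq_zero.mp hx2y1
  have e_x2i : x2 * x1i = x1i * x2 := by
    calc x2 * x1i = x1i * (x1 * (x2 * x1i)) := by rw [← mul_assoc, hx1il, one_mul]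
      _ = x1i * ((x2 * x1) * x1i) := by rw [← mul_assoc x1 x2 x1i, ← e_x2x1]
      _ = x1i * (x2 * (x1 * x1i)) := by rw [mul_assoc x2 x1 x1i]
      _ = x1i * x2 := by rw [hx1ir, mul_one]
  have e_y2i : y2 * x1i = x1i * y2 := by
    calc y2 * x1i = x1i * (x1 * (y2 * x1i)) := by rw [← mul_assoc, hx1il, one_mul]
      _ = x1i * ((y2 * x1) * x1i) := by rw [← mul_assoc x1 y2 x1i, ← e_y2x1]
      _ = x1i * (y2 * (x1 * x1i)) := by rw [mul_assoc y2 x1 x1i]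
      _ = x1i * y2 := by rw [hx1ir, mul_one]
  have e_y1i : y1 * x1i = x1i * y1 + x1i * (x1i * h) := by
    calc y1 * x1i = (x1i * x1) * (y1 * x1i) := by rw [hx1il, one_mul]
      _ = x1i * ((x1 * y1) * x1i) := by noncomm_ring
      _ = x1i * ((y1 * x1 + h) * x1i) := by
          rw [show x1 * y1 = y1 * x1 + h by rw [e_y1x1]; noncomm_ring]
      _ = x1i * (y1 * (x1 * x1i)) + x1i * (h * x1i) := by noncomm_ring
      _ = x1i * y1 + x1i * (x1i * h) := by rw [hx1ir, mul_one, hh x1i]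
  -- cancellation triples
  have c1 : ∀ c : R, x1i * (x1 * c) = c := fun c => by rw [← mul_assoc, hx1il, one_mul]
  have c2 : ∀ c : R, x1 * (x1i * c) = c := fun c => by rw [← mul_assoc, hx1ir, one_mul]
  -- triple swap lemmas
  have t_y1x1 : ∀ c : R, y1 * (x1 * c) = x1 * (y1 * c) - h * c := fun c => by
    rw [← mul_assoc, e_y1x1]; noncomm_ring
  have t_y2x2 : ∀ c : R, y2 * (x2 * c) = x2 * (y2 * c) - h * c := fun c => by
    rw [← mul_assoc, e_y2x2]; noncomm_ring
  have t_x2x1 : ∀ c : R, x2 * (x1 * c) = x1 * (x2 * c) := fun c => by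
    rw [← mul_assoc, e_x2x1]; noncomm_ring
  have t_y2y1 : ∀ c : R, y2 * (y1 * c) = y1 * (y2 * c) := fun c => by
    rw [← mul_assoc, e_y2y1]; noncomm_ring
  have t_y2x1 : ∀ c : R, y2 * (x1 * c) = x1 * (y2 * c) := fun c => by
    rw [← mul_assoc, e_y2x1]; noncomm_ring
  have t_x2y1 : ∀ c : R, x2 * (y1 * c) = y1 * (x2 * c) := fun c => by
    rw [← mul_assoc, e_x2y1]; noncomm_ring
  have t_x2i : ∀ c : R, x2 * (x1i * c) = x1i * (x2 * c) := fun c => by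
    rw [← mul_assoc, e_x2i]; noncomm_ring
  have t_y2i : ∀ c : R, y2 * (x1i * c) = x1i * (y2 * c) := fun c => by
    rw [← mul_assoc, e_y2i]; noncomm_ring
  have t_y1i : ∀ c : R, y1 * (x1i * c) = x1i * (y1 * c) + x1i * (x1i * (h * c)) := fun c => by
    rw [← mul_assoc, e_y1i]; noncomm_ring
  -- moving h and α1 to the right
  have hx1' : h * x1 = x1 * h := hh x1
  have hx1i' : h * x1i = x1i * h := hh x1i
  have hy1' : h * y1 = y1 * h := hh y1
  have hx2' : h * x2 = x2 * h := hh x2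
  have hy2' : h * y2 = y2 * h := hh y2
  have th1 : ∀ c : R, h * (x1 * c) = x1 * (h * c) := fun c => by
    rw [← mul_assoc, hh x1, mul_assoc]
  have th2 : ∀ c : R, h * (x1i * c) = x1i * (h * c) := fun c => by
    rw [← mul_assoc, hh x1i, mul_assoc]
  have th3 : ∀ c : R, h * (y1 * c) = y1 * (h * c) := fun c => by
    rw [← mul_assoc, hh y1, mul_assoc]
  have th4 : ∀ c : R, h * (x2 * c) = x2 * (h * c) := fun c => by
    rw [← mul_assoc, hh x2, mul_assoc]
  have th5 : ∀ c : R, h * (y2 * c) = y2 * (h * c) := fun c => by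
    rw [← mul_assoc, hh y2, mul_assoc]
  have ta1 : h * α1 = α1 * h := (hA1 h).symm
  have a1 : α1 * x1 = x1 * α1 := hA1 x1
  have a2 : α1 * x1i = x1i * α1 := hA1 x1i
  have a3 : α1 * y1 = y1 * α1 := hA1 y1
  have a4 : α1 * x2 = x2 * α1 := hA1 x2
  have a5 : α1 * y2 = y2 * α1 := hA1 y2
  have ta1' : ∀ c : R, α1 * (x1 * c) = x1 * (α1 * c) := fun c => by
    rw [← mul_assoc, hA1 x1, mul_assoc]
  have ta2' : ∀ c : R, α1 * (x1i * c) = x1i * (α1 * c) := fun c => by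
    rw [← mul_assoc, hA1 x1i, mul_assoc]
  have ta3' : ∀ c : R, α1 * (y1 * c) = y1 * (α1 * c) := fun c => by
    rw [← mul_assoc, hA1 y1, mul_assoc]
  have ta4' : ∀ c : R, α1 * (x2 * c) = x2 * (α1 * c) := fun c => by
    rw [← mul_assoc, hA1 x2, mul_assoc]
  have ta5' : ∀ c : R, α1 * (y2 * c) = y2 * (α1 * c) := fun c => by
    rw [← mul_assoc, hA1 y2, mul_assoc]
  refine ⟨?_, ?_, ?_, ?_, ?_, ?_⟩ <;>
  · simp only [pow_two, mul_add, add_mul, mul_sub, sub_mul, mul_neg, neg_mul,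
      mul_one, one_mul, mul_assoc,
      hx1il, hx1ir, c1, c2,
      e_y1x1, e_y2x2, e_x2x1, e_y2y1, e_y2x1, e_x2y1, e_x2i, e_y2i, e_y1i,
      t_y1x1, t_y2x2, t_x2x1, t_y2y1, t_y2x1, t_x2y1, t_x2i, t_y2i, t_y1i,
      hx1', hx1i', hy1', hx2', hy2', th1, th2, th3, th4, th5,
      ta1, a1, a2, a3, a4, a5, ta1', ta2', ta3', ta4', ta5']
    abel
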